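/- Let K be an algebraically closed field, J' an ideal of K[T,X_1,...,X_n] whose associated primes all contain no nonzero polynomial in K[T], and let τ ∈ K. If monomials m_1,...,m_k in X_1,...,X_n are K-linearly independent modulo J' + ⟨T - τ⟩, then they are K(T)-linearly independent modulo the extension of J' in K(T)[X_1,...,X_n]. Consequently, dim_K K[T,X]/(J' + ⟨T-τ⟩) ≤ dim_{K(T)} K(T)[X]/J'·K(T)[X]. -/

import Mathlib

open MvPolynomial

set_option maxHeartbeats 1000000
set_option synthInstance.maxHeartbeats 200000

section Stmt10Aux

attribute [local instance] MvPolynomial.algebraMvPolynomial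

variable {K : Type*} [Field K] {n : ℕ}

/-- Saturation: since no associated prime of `J'` contains a nonzero element of `K[T]`,
nonzero elements of `K[T]` are nonzerodivisors mod `J'`. -/
private lemma stmt10_satur (J' : Ideal (MvPolynomial (Fin n) (Polynomial K)))
    (hass : ∀ P ∈ associatedPrimes (MvPolynomial (Fin n) (Polynomial K))
        ((MvPolynomial (Fin n) (Polynomial K)) ⧸ J'),
      ∀ a : Polynomial K, MvPolynomial.C a ∈ P → a = 0)
    {a : Polynomial K} (ha : a ≠ 0)
    {f : MvPolynomial (Fin n) (Polynomial K)} (h : MvPolynomial.C a * f ∈ J') : f ∈ J' := by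
  by_contra hf
  have hz : (MvPolynomial.C a : MvPolynomial (Fin n) (Polynomial K)) ∈
      ⋃ p ∈ associatedPrimes (MvPolynomial (Fin n) (Polynomial K))
        ((MvPolynomial (Fin n) (Polynomial K)) ⧸ J'), (p : Set _) := by
    rw [biUnion_associatedPrimes_eq_zero_divisors]
    refine ⟨Ideal.Quotient.mk J' f, ?_, ?_⟩
    · simpa [ne_eq, Ideal.Quotient.eq_zero_iff_mem] using hf
    · calc MvPolynomial.C a • Ideal.Quotient.mk J' f
          = MvPolynomial.C a • Submodule.Quotient.mk f := by rw [Ideal.Quotient.mk_eq_mk]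
        _ = Submodule.Quotient.mk (MvPolynomial.C a • f) :=
            (Submodule.Quotient.mk_smul _ _ _).symm
        _ = Ideal.Quotient.mk J' (MvPolynomial.C a * f) := by
            rw [smul_eq_mul, Ideal.Quotient.mk_eq_mk]
        _ = 0 := Ideal.Quotient.eq_zero_iff_mem.mpr h
  simp only [Set.mem_iUnion, SetLike.mem_coe] at hz
  obtain ⟨P, hP, haP⟩ := hz
  exact ha (hass P hP a haP)

/-- Contraction: membership in the extended ideal over `K(T)` pulls back to `J'`. -/
private lemma stmt10_contract (J' : Ideal (MvPolynomial (Fin n) (Polynomial K)))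
    (hass : ∀ P ∈ associatedPrimes (MvPolynomial (Fin n) (Polynomial K))
        ((MvPolynomial (Fin n) (Polynomial K)) ⧸ J'),
      ∀ a : Polynomial K, MvPolynomial.C a ∈ P → a = 0)
    {f : MvPolynomial (Fin n) (Polynomial K)}
    (h : MvPolynomial.map (algebraMap (Polynomial K) (RatFunc K)) f ∈
      Ideal.map (MvPolynomial.map (algebraMap (Polynomial K) (RatFunc K))) J') : f ∈ J' := by
  rw [← MvPolynomial.algebraMap_def] at h
  obtain ⟨⟨j, s⟩, hs⟩ := (IsLocalization.mem_map_algebraMap_iff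
    ((nonZeroDivisors (Polynomial K)).map (MvPolynomial.C (σ := Fin n)))
    (MvPolynomial (Fin n) (RatFunc K))).mp h
  obtain ⟨d, hd, hds⟩ := s.2
  have hinj : Function.Injective
      (MvPolynomial.map (σ := Fin n) (algebraMap (Polynomial K) (RatFunc K))) :=
    MvPolynomial.map_injective _ (IsFractionRing.injective _ _)
  have hfd : MvPolynomial.C d * f = (j : MvPolynomial (Fin n) (Polynomial K)) := by
    apply hinj
    show (MvPolynomial.map (algebraMap (Polynomial K) (RatFunc K))) (MvPolynomial.C d * f)
        = (MvPolynomial.map (algebraMap (Polynomial K) (RatFunc K)))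
          (j : MvPolynomial (Fin n) (Polynomial K))
    rw [← MvPolynomial.algebraMap_def, map_mul, hds, mul_comm]
    exact hs
  exact stmt10_satur J' hass (nonZeroDivisors.ne_zero hd) (hfd ▸ j.2)

private lemma stmt10_mk_C_mul {I : Ideal (MvPolynomial (Fin n) (Polynomial K))} {τ : K}
    (hI : MvPolynomial.C (Polynomial.X - Polynomial.C τ) ∈ I)
    (a : Polynomial K) (x : MvPolynomial (Fin n) (Polynomial K)) :
    Ideal.Quotient.mk I (MvPolynomial.C a * x)
      = Polynomial.eval τ a • Ideal.Quotient.mk I x := by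
  have h1 : Ideal.Quotient.mk I (MvPolynomial.C a)
      = Ideal.Quotient.mk I (MvPolynomial.C (Polynomial.C (Polynomial.eval τ a))) := by
    rw [Ideal.Quotient.mk_eq_mk_iff_sub_mem, ← map_sub]
    have hdvd : (Polynomial.X - Polynomial.C τ) ∣ (a - Polynomial.C (Polynomial.eval τ a)) :=
      Polynomial.dvd_iff_isRoot.mpr (by simp [Polynomial.IsRoot])
    obtain ⟨c, hc⟩ := hdvd
    rw [hc, map_mul]
    exact I.mul_mem_right _ hI
  have h2 : Polynomial.eval τ a • Ideal.Quotient.mk I x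
      = Ideal.Quotient.mk I (Polynomial.eval τ a • x) :=
    calc Polynomial.eval τ a • Ideal.Quotient.mk I x
        = Polynomial.eval τ a • Submodule.Quotient.mk x := by rw [Ideal.Quotient.mk_eq_mk]
      _ = Submodule.Quotient.mk (Polynomial.eval τ a • x) :=
          (Submodule.Quotient.mk_smul _ _ _).symm
      _ = Ideal.Quotient.mk I (Polynomial.eval τ a • x) := by rw [Ideal.Quotient.mk_eq_mk]
  rw [map_mul, h1, h2, ← map_mul]
  congr 1
  rw [Algebra.smul_def, MvPolynomial.algebraMap_apply, Polynomial.algebraMap_eq]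

/-- Key lemma: monomial-type families independent modulo the fiber are independent
over `K(T)` modulo the extension. -/
private lemma stmt10_key (J' : Ideal (MvPolynomial (Fin n) (Polynomial K)))
    (hass : ∀ P ∈ associatedPrimes (MvPolynomial (Fin n) (Polynomial K))
        ((MvPolynomial (Fin n) (Polynomial K)) ⧸ J'),
      ∀ a : Polynomial K, MvPolynomial.C a ∈ P → a = 0)
    (τ : K) {ι : Type*} (μ : ι → MvPolynomial (Fin n) (Polynomial K))
    (hind : LinearIndependent K (fun i =>
      Ideal.Quotient.mk
        (J' ⊔ Ideal.span {MvPolynomial.C (Polynomial.X - Polynomial.C τ)}) (μ i))) :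
    LinearIndependent (RatFunc K) (fun i =>
      Ideal.Quotient.mk
        (Ideal.map (MvPolynomial.map (algebraMap (Polynomial K) (RatFunc K))) J')
        (MvPolynomial.map (algebraMap (Polynomial K) (RatFunc K)) (μ i))) := by
  classical
  have hXτ : MvPolynomial.C (σ := Fin n) (Polynomial.X - Polynomial.C τ) ∈
      J' ⊔ Ideal.span {MvPolynomial.C (Polynomial.X - Polynomial.C τ)} :=
    Ideal.mem_sup_right (Ideal.subset_span rfl)
  -- the degree-descent claim
  have main : ∀ (N : ℕ) (s : Finset ι) (p : ι → Polynomial K),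
      (∀ i ∈ s, p i ≠ 0 → (p i).natDegree < N) →
      (∑ i ∈ s, MvPolynomial.C (p i) * μ i) ∈ J' → ∀ i ∈ s, p i = 0 := by
    intro N
    induction N with
    | zero =>
      intro s p hdeg _ i hi
      by_contra h
      exact Nat.not_lt_zero _ (hdeg i hi h)
    | succ N IH =>
      intro s p hdeg hmem
      have h0 : (∑ i ∈ s, Polynomial.eval τ (p i) • Ideal.Quotient.mk
          (J' ⊔ Ideal.span {MvPolynomial.C (Polynomial.X - Polynomial.C τ)}) (μ i)) = 0 := by
        have := Ideal.Quotient.eq_zero_iff_mem.mpr (Ideal.mem_sup_left hmem :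
          (∑ i ∈ s, MvPolynomial.C (p i) * μ i) ∈
            J' ⊔ Ideal.span {MvPolynomial.C (Polynomial.X - Polynomial.C τ)})
        rw [map_sum] at this
        simp_rw [stmt10_mk_C_mul hXτ] at this
        exact this
      have heval : ∀ i ∈ s, Polynomial.eval τ (p i) = 0 :=
        linearIndependent_iff'.mp hind s _ h0
      set q : ι → Polynomial K := fun i => p i /ₘ (Polynomial.X - Polynomial.C τ) with hq
      have hpq : ∀ i ∈ s, p i = (Polynomial.X - Polynomial.C τ) * q i := by
        intro i hi
        have hdvd : (Polynomial.X - Polynomial.C τ) ∣ p i :=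
          Polynomial.dvd_iff_isRoot.mpr (heval i hi)
        conv_lhs => rw [← Polynomial.modByMonic_add_div (p i) (Polynomial.X - Polynomial.C τ)]
        rw [(Polynomial.modByMonic_eq_zero_iff_dvd (Polynomial.monic_X_sub_C τ)).mpr hdvd,
          zero_add]
      have hmem' : (∑ i ∈ s, MvPolynomial.C (q i) * μ i) ∈ J' := by
        apply stmt10_satur J' hass (Polynomial.X_sub_C_ne_zero τ)
        have hrw : (∑ i ∈ s, MvPolynomial.C (p i) * μ i)
            = MvPolynomial.C (Polynomial.X - Polynomial.C τ) *
              ∑ i ∈ s, MvPolynomial.C (q i) * μ i := by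
          rw [Finset.mul_sum]
          refine Finset.sum_congr rfl fun i hi => ?_
          rw [hpq i hi, map_mul, mul_assoc]
        rwa [hrw] at hmem
      intro i hi
      have hqi : q i = 0 := by
        refine IH s q (fun j hj hqj => ?_) hmem' i hi
        have hpj : p j ≠ 0 := by
          intro h0'
          apply hqj
          have h1 := hpq j hj
          rw [h0'] at h1
          exact (mul_eq_zero.mp h1.symm).resolve_left (Polynomial.X_sub_C_ne_zero τ)
        have hdd : (p j).natDegree = 1 + (q j).natDegree := by
          rw [hpq j hj, Polynomial.natDegree_mul (Polynomial.X_sub_C_ne_zero τ) hqj,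
            Polynomial.natDegree_X_sub_C]
        have := hdeg j hj hpj
        omega
      rw [hpq i hi, hqi, mul_zero]
  -- now the linear independence over K(T)
  rw [linearIndependent_iff']
  intro s g hsum i hi
  obtain ⟨b, hb⟩ := IsLocalization.exist_integer_multiples (nonZeroDivisors (Polynomial K)) s g
  have hbp : ∀ j ∈ s, ∃ a : Polynomial K,
      algebraMap (Polynomial K) (RatFunc K) a = (b : Polynomial K) • g j := fun j hj => hb j hj
  choose p0 hp0 using hbp
  set p : ι → Polynomial K := fun j => if h : j ∈ s then p0 j h else 0 with hp
  have hpdef : ∀ j ∈ s, algebraMap (Polynomial K) (RatFunc K) (p j)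
      = (b : Polynomial K) • g j := by
    intro j hj
    simp only [hp, dif_pos hj]
    exact hp0 j hj
  -- the inner sum lies in the extended ideal
  have hSig : (∑ j ∈ s, MvPolynomial.C (g j) *
      MvPolynomial.map (algebraMap (Polynomial K) (RatFunc K)) (μ j)) ∈
      Ideal.map (MvPolynomial.map (algebraMap (Polynomial K) (RatFunc K))) J' := by
    rw [← Ideal.Quotient.eq_zero_iff_mem, map_sum, ← hsum]
    refine Finset.sum_congr rfl fun j hj => ?_
    rw [map_mul]
    exact (Algebra.smul_def (A := MvPolynomial (Fin n) (RatFunc K) ⧸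
      Ideal.map (MvPolynomial.map (algebraMap (Polynomial K) (RatFunc K))) J') (g j) _).symm
  have hmemJ : (∑ j ∈ s, MvPolynomial.C (p j) * μ j) ∈ J' := by
    apply stmt10_contract J' hass
    have hrw : MvPolynomial.map (algebraMap (Polynomial K) (RatFunc K))
        (∑ j ∈ s, MvPolynomial.C (p j) * μ j)
        = MvPolynomial.C (algebraMap (Polynomial K) (RatFunc K) (b : Polynomial K)) *
          ∑ j ∈ s, MvPolynomial.C (g j) *
            MvPolynomial.map (algebraMap (Polynomial K) (RatFunc K)) (μ j) := by
      rw [map_sum, Finset.mul_sum]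
      refine Finset.sum_congr rfl fun j hj => ?_
      rw [map_mul, MvPolynomial.map_C, hpdef j hj, Algebra.smul_def, map_mul, mul_assoc]
    rw [hrw]
    exact Ideal.mul_mem_left _ _ hSig
  have hp0' : ∀ j ∈ s, p j = 0 := by
    refine main ((s.sup fun j => (p j).natDegree) + 1) s p
      (fun j hj _ => Nat.lt_succ_of_le (Finset.le_sup (f := fun j => (p j).natDegree) hj))
      hmemJ
  have h1 : (0 : RatFunc K) = algebraMap (Polynomial K) (RatFunc K) (b : Polynomial K) * g i := by
    rw [← Algebra.smul_def, ← hpdef i hi, hp0' i hi, map_zero]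
  have hb0 : algebraMap (Polynomial K) (RatFunc K) (b : Polynomial K) ≠ 0 := by
    have := nonZeroDivisors.ne_zero b.2
    simpa using fun h => this (IsFractionRing.injective (Polynomial K) (RatFunc K)
      (by rw [h, map_zero]))
  exact ((mul_eq_zero.mp h1.symm).resolve_left hb0)

end Stmt10Aux

theorem stmt10 (K : Type*) [Field K] [IsAlgClosed K] (n k : ℕ)
    (J' : Ideal (MvPolynomial (Fin n) (Polynomial K)))
    (hass : ∀ P ∈ associatedPrimes (MvPolynomial (Fin n) (Polynomial K))
        ((MvPolynomial (Fin n) (Polynomial K)) ⧸ J'),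
      ∀ a : Polynomial K, MvPolynomial.C a ∈ P → a = 0)
    (τ : K) (m : Fin k → MvPolynomial (Fin n) (Polynomial K))
    (hm : ∀ i, ∃ d : Fin n →₀ ℕ, m i = MvPolynomial.monomial d 1)
    (hind : LinearIndependent K (fun i =>
      Ideal.Quotient.mk
        (J' ⊔ Ideal.span {MvPolynomial.C (Polynomial.X - Polynomial.C τ)}) (m i))) :
    LinearIndependent (RatFunc K) (fun i =>
      Ideal.Quotient.mk
        (Ideal.map (MvPolynomial.map (algebraMap (Polynomial K) (RatFunc K))) J')
        (MvPolynomial.map (algebraMap (Polynomial K) (RatFunc K)) (m i)))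
    ∧ Module.rank K
        ((MvPolynomial (Fin n) (Polynomial K)) ⧸
          (J' ⊔ Ideal.span {MvPolynomial.C (Polynomial.X - Polynomial.C τ)}))
      ≤ Module.rank (RatFunc K)
        ((MvPolynomial (Fin n) (RatFunc K)) ⧸
          Ideal.map (MvPolynomial.map (algebraMap (Polynomial K) (RatFunc K))) J') := by
  classical
  refine ⟨stmt10_key J' hass τ m hind, ?_⟩
  have hXτ : MvPolynomial.C (σ := Fin n) (Polynomial.X - Polynomial.C τ) ∈
      J' ⊔ Ideal.span {MvPolynomial.C (Polynomial.X - Polynomial.C τ)} :=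
    Ideal.mem_sup_right (Ideal.subset_span rfl)
  set sset : Set ((MvPolynomial (Fin n) (Polynomial K)) ⧸
      (J' ⊔ Ideal.span {MvPolynomial.C (Polynomial.X - Polynomial.C τ)})) :=
    Set.range (fun d : (Fin n →₀ ℕ) => Ideal.Quotient.mk
      (J' ⊔ Ideal.span {MvPolynomial.C (Polynomial.X - Polynomial.C τ)})
      (MvPolynomial.monomial d (1 : Polynomial K))) with hsset
  have hspan : Submodule.span K sset = ⊤ := by
    rw [eq_top_iff]
    rintro x -
    obtain ⟨f, rfl⟩ := Ideal.Quotient.mk_surjective x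
    rw [MvPolynomial.as_sum f, map_sum]
    refine Submodule.sum_mem _ fun v hv => ?_
    have hterm : (Ideal.Quotient.mk
          (J' ⊔ Ideal.span {MvPolynomial.C (Polynomial.X - Polynomial.C τ)}))
          (MvPolynomial.monomial v (MvPolynomial.coeff v f))
        = Polynomial.eval τ (MvPolynomial.coeff v f) • (Ideal.Quotient.mk
          (J' ⊔ Ideal.span {MvPolynomial.C (Polynomial.X - Polynomial.C τ)}))
          (MvPolynomial.monomial v (1 : Polynomial K)) := by
      rw [← stmt10_mk_C_mul hXτ, MvPolynomial.C_mul_monomial, mul_one]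
    rw [hterm]
    exact Submodule.smul_mem _ _ (Submodule.subset_span ⟨v, rfl⟩)
  obtain ⟨t, hts, htspan, htli⟩ := exists_linearIndependent K sset
  have htop : ⊤ ≤ Submodule.span K (Set.range ((↑) : t → ((MvPolynomial (Fin n) (Polynomial K)) ⧸
      (J' ⊔ Ideal.span {MvPolynomial.C (Polynomial.X - Polynomial.C τ)})))) := by
    rw [Subtype.range_coe, htspan, hspan]
  let b := Module.Basis.mk htli htop
  have hrank : Module.rank K ((MvPolynomial (Fin n) (Polynomial K)) ⧸
      (J' ⊔ Ideal.span {MvPolynomial.C (Polynomial.X - Polynomial.C τ)})) = Cardinal.mk t :=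
    b.mk_eq_rank''.symm
  have hchoice : ∀ y : t, ∃ d : Fin n →₀ ℕ, (y : ((MvPolynomial (Fin n) (Polynomial K)) ⧸
      (J' ⊔ Ideal.span {MvPolynomial.C (Polynomial.X - Polynomial.C τ)}))) = Ideal.Quotient.mk
      (J' ⊔ Ideal.span {MvPolynomial.C (Polynomial.X - Polynomial.C τ)})
      (MvPolynomial.monomial d (1 : Polynomial K)) := by
    intro y
    obtain ⟨d, hd⟩ := hts y.2
    exact ⟨d, hd.symm⟩
  choose dd hdd using hchoice
  have hli2 : LinearIndependent K (fun y : t => Ideal.Quotient.mk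
      (J' ⊔ Ideal.span {MvPolynomial.C (Polynomial.X - Polynomial.C τ)})
      (MvPolynomial.monomial (dd y) (1 : Polynomial K))) := by
    have hfun : (fun y : t => Ideal.Quotient.mk
        (J' ⊔ Ideal.span {MvPolynomial.C (Polynomial.X - Polynomial.C τ)})
        (MvPolynomial.monomial (dd y) (1 : Polynomial K))) = ((↑) : t → _) :=
      funext fun y => (hdd y).symm
    rw [hfun]
    exact htli
  have hliQ := stmt10_key J' hass τ
    (fun y : t => MvPolynomial.monomial (dd y) (1 : Polynomial K)) hli2
  rw [hrank]
  exact hliQ.cardinal_le_rank
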